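/- Let k be an odd positive integer, set a_i = i for i = 1, ..., k and g_i = i for all i, and define P(z) = prod_{j=1}^{k}(z+j) + sum_{i=1}^{k} i! * prod_{j=i+1}^{k}(z+j). Then P(-(k+1)) = 0; that is, the bound |z| <= a_k + 1 in the Polynomial Perturbation Lemma is attained. -/
import Mathlib

lemma aux_fact_prod (n : ℕ) : ∏ t ∈ Finset.range n, ((t : ℂ) + 1) = n.factorial := by
  induction n with
  | zero => simp
  | succ m ih =>
    rw [Finset.prod_range_succ, ih, Nat.factorial_succ]
    push_cast
    ring

lemma aux_prod_neg (n : ℕ) :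
    ∏ t ∈ Finset.range n, ((t : ℂ) - n) = (-1) ^ n * n.factorial := by
  rw [← Finset.prod_range_reflect]
  have h : ∀ t ∈ Finset.range n, ((n - 1 - t : ℕ) : ℂ) - n = -(((t : ℂ)) + 1) := by
    intro t ht
    simp only [Finset.mem_range] at ht
    have h2 : (n - 1 - t : ℕ) = n - (t + 1) := by omega
    rw [h2, Nat.cast_sub (by omega)]
    push_cast
    ring
  rw [Finset.prod_congr rfl h]
  have h2 : ∀ t ∈ Finset.range n, -(((t : ℂ)) + 1) = (-1) * ((t : ℂ) + 1) := by
    intro t _; ring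
  rw [Finset.prod_congr rfl h2, Finset.prod_mul_distrib, Finset.prod_const,
    Finset.card_range, aux_fact_prod]

lemma aux_prod_Icc (a b : ℕ) (hab : a ≤ b) :
    ∏ j ∈ Finset.Icc (a + 1) b, (-(((b : ℂ)) + 1) + (j : ℂ)) =
      (-1) ^ (b - a) * (b - a).factorial := by
  rw [← Finset.Ico_add_one_right_eq_Icc, Finset.prod_Ico_eq_prod_range]
  have h1 : b + 1 - (a + 1) = b - a := by omega
  rw [h1]
  have h : ∀ t ∈ Finset.range (b - a),
      (-(((b : ℂ)) + 1) + ((a + 1 + t : ℕ) : ℂ)) = ((t : ℂ) - ((b - a : ℕ) : ℂ)) := by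
    intro t ht
    rw [Nat.cast_sub hab]
    push_cast
    ring
  rw [Finset.prod_congr rfl h, aux_prod_neg]

theorem stmt_17 (k : ℕ) (hk : 0 < k) (hodd : Odd k) :
    (∏ j ∈ Finset.Icc 1 k, (-(((k : ℂ)) + 1) + (j : ℂ))) +
      ∑ i ∈ Finset.Icc 1 k, (Nat.factorial i : ℂ) *
        ∏ j ∈ Finset.Icc (i + 1) k, (-(((k : ℂ)) + 1) + (j : ℂ)) = 0 := by
  have hneg : (-1 : ℂ) ^ k = -1 := hodd.neg_one_pow
  set f : ℕ → ℂ := fun i => (Nat.factorial i : ℂ) * ((-1) ^ (k - i) * (k - i).factorial)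
    with hf
  have h0 : (∏ j ∈ Finset.Icc 1 k, (-(((k : ℂ)) + 1) + (j : ℂ)))
      = (-1) ^ k * k.factorial := by
    have := aux_prod_Icc 0 k (Nat.zero_le k)
    simpa using this
  have h1 : ∑ i ∈ Finset.Icc 1 k, (Nat.factorial i : ℂ) *
        ∏ j ∈ Finset.Icc (i + 1) k, (-(((k : ℂ)) + 1) + (j : ℂ))
      = ∑ i ∈ Finset.Icc 1 k, f i := by
    apply Finset.sum_congr rfl
    intro i hi
    simp only [Finset.mem_Icc] at hi
    rw [aux_prod_Icc i k hi.2]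
  -- full sum over range (k+1) vanishes by reflection
  have hS : ∑ i ∈ Finset.range (k + 1), f i = 0 := by
    have hrefl : ∑ i ∈ Finset.range (k + 1), f (k - i)
        = ∑ i ∈ Finset.range (k + 1), f i := by
      have := Finset.sum_range_reflect f (k + 1)
      simpa using this
    have hflip : ∀ i ∈ Finset.range (k + 1), f (k - i) = -f i := by
      intro i hi
      simp only [Finset.mem_range] at hi
      have hik : i ≤ k := by omega
      have h2 : k - (k - i) = i := by omega
      have h4 : (-1 : ℂ) ^ i = -(-1) ^ (k - i) := by
        have h3 : (-1 : ℂ) ^ i * (-1) ^ (k - i) = -1 := by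
          rw [← pow_add]
          have : i + (k - i) = k := by omega
          rw [this, hneg]
        have hsq : (-1 : ℂ) ^ (k - i) * (-1) ^ (k - i) = 1 := by
          rw [← pow_add, ← two_mul, pow_mul]
          simp
        calc (-1 : ℂ) ^ i = (-1) ^ i * ((-1) ^ (k - i) * (-1) ^ (k - i)) := by
              rw [hsq, mul_one]
          _ = ((-1) ^ i * (-1) ^ (k - i)) * (-1) ^ (k - i) := by ring
          _ = -(-1) ^ (k - i) := by rw [h3]; ring
      simp only [hf, h2]
      rw [h4]
      ring
    rw [Finset.sum_congr rfl hflip, Finset.sum_neg_distrib] at hrefl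
    have h5 : (2 : ℂ) * ∑ i ∈ Finset.range (k + 1), f i = 0 := by
      linear_combination - hrefl
    have h6 : (2 : ℂ) ≠ 0 := by norm_num
    exact (mul_eq_zero.mp h5).resolve_left h6
  -- split off the i = 0 term
  have hsplit : ∑ i ∈ Finset.range (k + 1), f i = f 0 + ∑ i ∈ Finset.Icc 1 k, f i := by
    rw [Finset.sum_range_succ' f k, ← Finset.Ico_add_one_right_eq_Icc,
      Finset.sum_Ico_eq_sum_range]
    have h7 : k + 1 - 1 = k := by omega
    rw [h7, add_comm]
    congr 1
    refine Finset.sum_congr rfl fun i _ => ?_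
    congr 1
    omega
  have hf0 : f 0 = (-1) ^ k * k.factorial := by
    simp [hf]
  rw [h0, h1]
  have : ∑ i ∈ Finset.Icc 1 k, f i = -((-1) ^ k * k.factorial) := by
    rw [← hf0]
    linear_combination hS - hsplit
  rw [this]
  ring
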